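/- Let Δ₁ and Δ₂ be positive definite real k×k matrices such that 2Δ₁ − Δ₂ is positive definite, and for a positive definite Δ let f_Δ : ℝ^k → ℝ be the centered Gaussian density f_Δ(x) = (2π)^{-k/2} (det Δ)^{-1/2} exp(−xᵀ Δ⁻¹ x / 2). Then the expected squared likelihood ratio satisfies ∫_{ℝ^k} (f_{Δ₂}(x))² / f_{Δ₁}(x) dx = det Δ₁ / √( det Δ₂ · det(2Δ₁ − Δ₂) ). -/

import Mathlib

open MeasureTheory Matrix

theorem sqrt_finset_prod {ι : Type*} (s : Finset ι) (f : ι → ℝ) (h : ∀ i ∈ s, 0 ≤ f i) :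
    Real.sqrt (∏ i ∈ s, f i) = ∏ i ∈ s, Real.sqrt (f i) := by
  induction s using Finset.cons_induction with
  | empty => simp
  | cons a s ha ih =>
      rw [Finset.prod_cons, Finset.prod_cons, Real.sqrt_mul (h a (Finset.mem_cons_self a s)),
        ih (fun i hi => h i (Finset.mem_cons_of_mem hi))]

theorem posdef_conj {n : Type*} [Fintype n] [DecidableEq n] {A B : Matrix n n ℝ}
    (hA : A.PosDef) (hB : IsUnit B.det) : (Bᵀ * A * B).PosDef := by
  refine Matrix.PosDef.of_dotProduct_mulVec_pos ?_ (fun x hx => ?_)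
  · have hAt : Aᵀ = A := hA.1
    show (Bᵀ * A * B)ᴴ = _
    rw [Matrix.conjTranspose_eq_transpose_of_trivial, Matrix.transpose_mul, Matrix.transpose_mul,
      Matrix.transpose_transpose, hAt, Matrix.mul_assoc]
  · have hBx : B *ᵥ x ≠ 0 := by
      have hinj := Matrix.mulVec_injective_iff_isUnit.mpr (Matrix.isUnit_iff_isUnit_det B |>.mpr hB)
      intro h
      exact hx (hinj (by simpa using h))
    have := hA.dotProduct_mulVec_pos hBx
    simp only [star_trivial] at this ⊢
    rwa [← Matrix.mulVec_mulVec, ← Matrix.mulVec_mulVec, Matrix.dotProduct_mulVec (v := x),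
      Matrix.vecMul_transpose]

theorem gauss_int {k : ℕ} (M : Matrix (Fin k) (Fin k) ℝ) (hM : M.PosDef) :
    ∫ x : Fin k → ℝ, Real.exp (-(dotProduct x (M.mulVec x)) / 2)
      = Real.sqrt ((2 * Real.pi) ^ k / M.det) := by
  have hH := hM.1
  set U : Matrix (Fin k) (Fin k) ℝ := (hH.eigenvectorUnitary : Matrix (Fin k) (Fin k) ℝ) with hU
  set lam : Fin k → ℝ := hH.eigenvalues with hlam
  have hlampos : ∀ i, 0 < lam i := hM.eigenvalues_pos
  have hspec : M = U * diagonal lam * star U := by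
    simpa using hH.spectral_theorem
  have hsU : star U = Uᵀ := by
    rw [Matrix.star_eq_conjTranspose, Matrix.conjTranspose_eq_transpose_of_trivial]
  have hquad : ∀ x : Fin k → ℝ, dotProduct x (M.mulVec x)
      = ∑ i, lam i * ((Uᵀ).mulVec x i)^2 := by
    intro x
    rw [hspec, hsU]
    rw [← mulVec_mulVec, ← mulVec_mulVec,
      Matrix.dotProduct_mulVec (w := diagonal lam *ᵥ (Uᵀ *ᵥ x)), ← Matrix.mulVec_transpose]
    simp only [dotProduct, Matrix.mulVec_diagonal, sq]
    exact Finset.sum_congr rfl fun i _ => by ring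
  have hUdet : U.det * U.det = 1 := by
    have h1 : U * Uᵀ = 1 := by
      rw [← hsU]; exact hH.eigenvectorUnitary.2.2
    have := congrArg Matrix.det h1
    rwa [Matrix.det_mul, Matrix.det_transpose, Matrix.det_one] at this
  have habs : |Uᵀ.det| = 1 := by
    rw [Matrix.det_transpose]
    rcases mul_self_eq_one_iff.mp hUdet with h | h <;> simp [h]
  have hdet : LinearMap.det (Matrix.toLin' Uᵀ) ≠ 0 := by
    rw [LinearMap.det_toLin']
    intro h; rw [h, abs_zero] at habs; norm_num at habs
  have hmap : (volume : Measure (Fin k → ℝ)).map (Matrix.toLin' Uᵀ) = volume := by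
    rw [Measure.map_linearMap_addHaar_pi_eq_smul_addHaar hdet, LinearMap.det_toLin']
    rw [abs_inv, habs]
    simp
  have hmeas : Measurable (Matrix.toLin' Uᵀ) :=
    (Matrix.toLin' Uᵀ).continuous_of_finiteDimensional.measurable
  have hgc : Continuous fun y : Fin k → ℝ => Real.exp (-(∑ i, lam i * (y i)^2) / 2) := by
    fun_prop
  have key : ∫ x : Fin k → ℝ, Real.exp (-(dotProduct x (M.mulVec x)) / 2)
      = ∫ y : Fin k → ℝ, Real.exp (-(∑ i, lam i * (y i)^2) / 2) := by
    simp_rw [hquad]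
    have h2 : ∀ x : Fin k → ℝ, (Uᵀ).mulVec x = Matrix.toLin' Uᵀ x :=
      fun x => (Matrix.toLin'_apply _ _).symm
    simp_rw [h2]
    rw [← integral_map hmeas.aemeasurable (hgc.aestronglyMeasurable), hmap]
  rw [key]
  have hprod : ∀ y : Fin k → ℝ, Real.exp (-(∑ i, lam i * (y i)^2) / 2)
      = ∏ i, Real.exp (-(lam i / 2) * (y i)^2) := by
    intro y
    rw [← Real.exp_sum]
    congr 1
    rw [neg_div, Finset.sum_div, ← Finset.sum_neg_distrib]
    exact Finset.sum_congr rfl fun i _ => by ring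
  simp_rw [hprod]
  rw [MeasureTheory.integral_fintype_prod_volume_eq_prod
    (f := fun i (t : ℝ) => Real.exp (-(lam i / 2) * t^2))]
  have hint : ∀ i, (∫ t : ℝ, Real.exp (-(lam i / 2) * t^2)) = Real.sqrt (2 * Real.pi / lam i) := by
    intro i
    rw [integral_gaussian]
    congr 1
    rw [div_div_eq_mul_div, mul_comm]
  simp_rw [hint]
  rw [← sqrt_finset_prod _ _ (fun i _ => (div_pos (by positivity) (hlampos i)).le)]
  congr 1
  rw [hH.det_eq_prod_eigenvalues]
  rw [Finset.prod_div_distrib, Finset.prod_const, Finset.card_univ, Fintype.card_fin]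
  norm_num
  rfl

noncomputable def gaussDensity {k : ℕ} (Δ : Matrix (Fin k) (Fin k) ℝ) (x : Fin k → ℝ) : ℝ :=
  (2 * Real.pi) ^ (-(k : ℝ) / 2) * Δ.det ^ (-(1 : ℝ) / 2) *
    Real.exp (-(dotProduct x (Δ⁻¹.mulVec x)) / 2)

set_option maxHeartbeats 1000000 in
/-- Expected squared likelihood ratio of two centered Gaussians: if
`2Δ₁ − Δ₂` is positive definite then
`∫ f_{Δ₂}² / f_{Δ₁} = det Δ₁ / √(det Δ₂ · det(2Δ₁ − Δ₂))`. -/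
theorem stmt18 (k : ℕ) (Δ₁ Δ₂ : Matrix (Fin k) (Fin k) ℝ)
    (h1 : Δ₁.PosDef) (h2 : Δ₂.PosDef) (h12 : ((2 : ℝ) • Δ₁ - Δ₂).PosDef) :
    (∫ x : Fin k → ℝ, (gaussDensity Δ₂ x) ^ 2 / gaussDensity Δ₁ x) =
      Δ₁.det / Real.sqrt (Δ₂.det * ((2 : ℝ) • Δ₁ - Δ₂).det) := by
  simp only [gaussDensity]
  set S := (2 : ℝ) • Δ₁ - Δ₂ with hS
  set M := (2 : ℝ) • Δ₂⁻¹ - Δ₁⁻¹ with hM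
  have h1i : Δ₁ * Δ₁⁻¹ = 1 := Matrix.mul_nonsing_inv _ h1.det_pos.ne'.isUnit
  have h2i : Δ₂⁻¹ * Δ₂ = 1 := Matrix.nonsing_inv_mul _ h2.det_pos.ne'.isUnit
  have hSi : S⁻¹ * S = 1 := Matrix.nonsing_inv_mul _ h12.det_pos.ne'.isUnit
  have hMeq : M = Δ₂⁻¹ * S * Δ₁⁻¹ := by
    rw [hS, hM, Matrix.mul_sub, Matrix.sub_mul, h2i, Matrix.mul_smul, Matrix.smul_mul,
      Matrix.mul_assoc, h1i, Matrix.mul_one, Matrix.one_mul]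
  set N := (2 : ℝ)⁻¹ • (Δ₂ + Δ₂ * S⁻¹ * Δ₂) with hN
  have hNM : N * M = 1 := by
    have key : Δ₂ * Δ₁⁻¹ + Δ₂ * S⁻¹ * Δ₂ * Δ₁⁻¹ = (2 : ℝ) • (Δ₂ * S⁻¹) := by
      have : Δ₂ * Δ₁⁻¹ + Δ₂ * S⁻¹ * Δ₂ * Δ₁⁻¹ = Δ₂ * S⁻¹ * (S + Δ₂) * Δ₁⁻¹ := by
        rw [Matrix.mul_add, Matrix.add_mul]
        congr 1
        rw [Matrix.mul_assoc (Δ₂ * S⁻¹) S Δ₁⁻¹, Matrix.mul_assoc Δ₂ S⁻¹ (S * Δ₁⁻¹),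
          ← Matrix.mul_assoc S⁻¹ S Δ₁⁻¹, hSi, Matrix.one_mul]
      rw [this]
      have hSD : S + Δ₂ = (2 : ℝ) • Δ₁ := by rw [hS]; abel
      rw [hSD, Matrix.mul_smul, Matrix.smul_mul, Matrix.mul_assoc, h1i, Matrix.mul_one]
    rw [hN, hM, Matrix.smul_mul]
    rw [Matrix.mul_sub, Matrix.add_mul, Matrix.add_mul]
    rw [Matrix.mul_smul, Matrix.mul_smul]
    have e1 : Δ₂ * Δ₂⁻¹ = 1 := Matrix.mul_nonsing_inv _ h2.det_pos.ne'.isUnit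
    rw [e1]
    have e2 : Δ₂ * S⁻¹ * Δ₂ * Δ₂⁻¹ = Δ₂ * S⁻¹ := by
      rw [Matrix.mul_assoc, e1, Matrix.mul_one]
    rw [e2]
    rw [← key, add_sub_cancel_right, smul_smul]
    norm_num
  have hNposdef : N.PosDef := by
    rw [hN]
    have hcong : (Δ₂ᵀ * S⁻¹ * Δ₂).PosDef := posdef_conj h12.inv (h2.det_pos.ne'.isUnit)
    have hΔ₂t : Δ₂ᵀ = Δ₂ := h2.1
    rw [hΔ₂t] at hcong
    have hadd := (h2.add hcong)
    refine Matrix.PosDef.of_dotProduct_mulVec_pos ?_ (fun x hx => ?_)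
    · show _ᴴ = _
      rw [Matrix.conjTranspose_smul, hadd.1.eq]
      simp
    · rw [Matrix.smul_mulVec, dotProduct_smul, smul_eq_mul]
      exact mul_pos (by norm_num) (hadd.dotProduct_mulVec_pos hx)
  have hMposdef : M.PosDef := by
    have : N⁻¹ = M := Matrix.inv_eq_right_inv hNM
    rw [← this]
    exact hNposdef.inv
  have hMdet : M.det = S.det / (Δ₁.det * Δ₂.det) := by
    rw [hMeq, Matrix.det_mul, Matrix.det_mul, Matrix.det_nonsing_inv, Matrix.det_nonsing_inv]
    simp only [Ring.inverse_eq_inv]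
    field_simp
  -- abbreviations
  have ha : (0:ℝ) < Δ₁.det := h1.det_pos
  have hb : (0:ℝ) < Δ₂.det := h2.det_pos
  have hs : (0:ℝ) < S.det := h12.det_pos
  have hπ : (0:ℝ) < 2 * Real.pi := by positivity
  set c : ℝ := (2 * Real.pi) ^ (-(k : ℝ) / 2) with hc
  have hcpos : 0 < c := Real.rpow_pos_of_pos hπ _
  set d1 : ℝ := Δ₁.det ^ (-(1:ℝ)/2) with hd1
  set d2 : ℝ := Δ₂.det ^ (-(1:ℝ)/2) with hd2
  have hd1pos : 0 < d1 := Real.rpow_pos_of_pos ha _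
  -- pointwise identity
  have hpoint : ∀ x : Fin k → ℝ,
      ((c * d2 * Real.exp (-(dotProduct x (Δ₂⁻¹.mulVec x)) / 2)) ^ 2 /
        (c * d1 * Real.exp (-(dotProduct x (Δ₁⁻¹.mulVec x)) / 2)))
      = (c * d2^2 / d1) * Real.exp (-(dotProduct x (M.mulVec x)) / 2) := by
    intro x
    have hq : dotProduct x (M.mulVec x)
        = 2 * dotProduct x (Δ₂⁻¹.mulVec x) - dotProduct x (Δ₁⁻¹.mulVec x) := by
      rw [hM, Matrix.sub_mulVec, Matrix.smul_mulVec]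
      rw [dotProduct_sub, dotProduct_smul, smul_eq_mul]
    rw [hq]
    have hE : Real.exp (-(dotProduct x (Δ₂⁻¹.mulVec x)) / 2) ^ 2 /
        Real.exp (-(dotProduct x (Δ₁⁻¹.mulVec x)) / 2)
        = Real.exp (-(2 * dotProduct x (Δ₂⁻¹.mulVec x)
            - dotProduct x (Δ₁⁻¹.mulVec x)) / 2) := by
      rw [sq, ← Real.exp_add, ← Real.exp_sub]
      congr 1
      ring
    rw [← hE]
    have hE1 : Real.exp (-(dotProduct x (Δ₁⁻¹.mulVec x)) / 2) ≠ 0 := Real.exp_ne_zero _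
    field_simp
  simp_rw [hpoint]
  rw [MeasureTheory.integral_const_mul, gauss_int M hMposdef, hMdet]
  -- final arithmetic
  have hP : ((2 * Real.pi) ^ k / (S.det / (Δ₁.det * Δ₂.det)))
      = (2 * Real.pi) ^ k * Δ₁.det * Δ₂.det / S.det := by
    field_simp
  rw [hP]
  have hsqrt : Real.sqrt ((2 * Real.pi) ^ k * Δ₁.det * Δ₂.det / S.det)
      = Real.sqrt ((2 * Real.pi) ^ k) * Real.sqrt Δ₁.det * Real.sqrt Δ₂.det / Real.sqrt S.det := by
    rw [Real.sqrt_div (by positivity), Real.sqrt_mul (by positivity), Real.sqrt_mul (by positivity)]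
  rw [hsqrt]
  have hhalf : ∀ x : ℝ, 0 < x → x ^ (-(1:ℝ)/2) = (Real.sqrt x)⁻¹ := by
    intro x hx
    rw [neg_div, Real.rpow_neg hx.le, Real.sqrt_eq_rpow]
  have hceq : c = (Real.sqrt ((2 * Real.pi) ^ k))⁻¹ := by
    rw [hc, ← hhalf _ (by positivity), ← Real.rpow_natCast (2 * Real.pi) k,
      ← Real.rpow_mul hπ.le]
    congr 1
    ring
  have hd1eq : d1 = (Real.sqrt Δ₁.det)⁻¹ := by rw [hd1, hhalf _ ha]
  have hd2eq : d2 = (Real.sqrt Δ₂.det)⁻¹ := by rw [hd2, hhalf _ hb]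
  rw [hceq, hd1eq, hd2eq, Real.sqrt_mul hb.le]
  have hsa : (0:ℝ) < Real.sqrt Δ₁.det := Real.sqrt_pos.mpr ha
  have hsb : (0:ℝ) < Real.sqrt Δ₂.det := Real.sqrt_pos.mpr hb
  have hss : (0:ℝ) < Real.sqrt S.det := Real.sqrt_pos.mpr hs
  have hsP : (0:ℝ) < Real.sqrt ((2 * Real.pi) ^ k) := Real.sqrt_pos.mpr (by positivity)
  have hsa2 : Real.sqrt Δ₁.det * Real.sqrt Δ₁.det = Δ₁.det := Real.mul_self_sqrt ha.le
  have hsb2 : Real.sqrt Δ₂.det * Real.sqrt Δ₂.det = Δ₂.det := Real.mul_self_sqrt hb.le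
  field_simp
  ring_nf
  rw [Real.sq_sqrt ha.le]
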